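/- arXiv:2307.16141 — 4 statements merged into one kernel-verified Lean document; each statement's English description precedes it below -/
import Mathlib

section
/- Let m ≥ 1, let f : ℝᵐ → ℝ be any function, let x⁰ ∈ ℝᵐ, let ζ > 0, γ ∈ ℝᵐ and w ∈ ℝ, and define f′(x) = f(x) + w·ReLU(ζ + γᵀ(x − x⁰)) − 2w·ReLU(γᵀ(x − x⁰)) + w·ReLU(−ζ + γᵀ(x − x⁰)). Then for every x ∈ ℝᵐ with |γᵀ(x − x⁰)| ≥ ζ one has f′(x) = f(x); that is, the cramming augmentation leaves the network output unchanged at every such input. -/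
open scoped RealInnerProductSpace

/-- The cramming augmentation
f′(x) = f(x) + w·ReLU(ζ + γᵀ(x − x⁰)) − 2w·ReLU(γᵀ(x − x⁰)) + w·ReLU(−ζ + γᵀ(x − x⁰))
leaves the output unchanged at every x with |γᵀ(x − x⁰)| ≥ ζ. -/
theorem cramming_unchanged_outside_band (m : ℕ) (hm : 1 ≤ m)
    (f : EuclideanSpace ℝ (Fin m) → ℝ)
    (x0 : EuclideanSpace ℝ (Fin m))
    (ζ : ℝ) (hζ : 0 < ζ) (γ : EuclideanSpace ℝ (Fin m)) (w : ℝ)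
    (f' : EuclideanSpace ℝ (Fin m) → ℝ)
    (hf' : f' = fun x => f x + w * max 0 (ζ + ⟪γ, x - x0⟫)
        - 2 * w * max 0 (⟪γ, x - x0⟫)
        + w * max 0 (-ζ + ⟪γ, x - x0⟫)) :
    ∀ x : EuclideanSpace ℝ (Fin m), ζ ≤ |⟪γ, x - x0⟫| → f' x = f x := by
  intro x hx
  subst hf'
  simp only
  set t : ℝ := ⟪γ, x - x0⟫ with ht
  rcases abs_cases t with ⟨h1, h2⟩ | ⟨h1, h2⟩
  · rw [h1] at hx
    rw [max_eq_right (by linarith), max_eq_right (by linarith), max_eq_right (by linarith)]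
    ring
  · rw [h1] at hx
    rw [max_eq_left (by linarith), max_eq_left (by linarith), max_eq_left (by linarith)]
    ring
end

section
/- Cramming correctness: let m ≥ 1, ε ≥ 0, let I be a finite index set, and for each c ∈ I let (xᶜ, yᶜ) ∈ ℝᵐ × ℝ be a training instance. Let [n] ∈ I, let f : ℝᵐ → ℝ satisfy |f(xᶜ) − yᶜ| ≤ ε for every c ∈ I with c ≠ [n], and suppose ζ > 0 and γ ∈ ℝᵐ satisfy |γᵀ(xᶜ − x^[n])| > ζ for every c ∈ I with c ≠ [n]. Set w = (y^[n] − f(x^[n]))/ζ and f′(x) = f(x) + w·ReLU(ζ + γᵀ(x − x^[n])) − 2w·ReLU(γᵀ(x − x^[n])) + w·ReLU(−ζ + γᵀ(x − x^[n])). Then |f′(xᶜ) − yᶜ| ≤ ε for every c ∈ I, and moreover f′(x^[n]) = y^[n]. -/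
open scoped RealInnerProductSpace

/-- Cramming correctness: if f makes every instance of I except [n]
acceptable (|f(xᶜ) − yᶜ| ≤ ε), and ζ > 0, γ satisfy |γᵀ(xᶜ − x^[n])| > ζ for all
c ∈ I, c ≠ [n], then with w = (y^[n] − f(x^[n]))/ζ the crammed function f′ makes
every instance of I acceptable, and fits the [n]-th instance exactly. -/
theorem cramming_correctness {ι : Type*} (m : ℕ) (hm : 1 ≤ m)
    (ε : ℝ) (hε : 0 ≤ ε) (I : Finset ι)
    (x : ι → EuclideanSpace ℝ (Fin m)) (y : ι → ℝ)
    (n : ι) (hn : n ∈ I)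
    (f : EuclideanSpace ℝ (Fin m) → ℝ)
    (hf : ∀ c ∈ I, c ≠ n → |f (x c) - y c| ≤ ε)
    (ζ : ℝ) (hζ : 0 < ζ) (γ : EuclideanSpace ℝ (Fin m))
    (hγ : ∀ c ∈ I, c ≠ n → ζ < |⟪γ, x c - x n⟫|)
    (w : ℝ) (hw : w = (y n - f (x n)) / ζ)
    (f' : EuclideanSpace ℝ (Fin m) → ℝ)
    (hf' : f' = fun z => f z + w * max 0 (ζ + ⟪γ, z - x n⟫)
        - 2 * w * max 0 (⟪γ, z - x n⟫)
        + w * max 0 (-ζ + ⟪γ, z - x n⟫)) :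
    (∀ c ∈ I, |f' (x c) - y c| ≤ ε) ∧ f' (x n) = y n := by
  have hfn : f' (x n) = y n := by
    subst hf'
    simp only [sub_self, inner_zero_right]
    rw [hw]
    have h1 : max 0 (ζ + (0:ℝ)) = ζ := by
      rw [add_zero]; exact max_eq_right hζ.le
    have h2 : max (0:ℝ) 0 = 0 := max_self 0
    have h3 : max 0 (-ζ + (0:ℝ)) = 0 := by
      rw [add_zero]; exact max_eq_left (neg_nonpos.mpr hζ.le)
    rw [h1, h2, h3]
    field_simp
    ring
  refine ⟨fun c hc => ?_, hfn⟩
  by_cases hcn : c = n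
  · subst hcn
    rw [hfn]
    simpa using hε
  · have ht := hγ c hc hcn
    set t := ⟪γ, x c - x n⟫ with htdef
    have hfc : f' (x c) = f (x c) := by
      subst hf'
      simp only
      rw [← htdef]
      rcases lt_abs.mp ht with h | h
      · rw [max_eq_right (by linarith), max_eq_right (by linarith),
          max_eq_right (by linarith)]
        ring
      · rw [max_eq_left (by linarith), max_eq_left (by linarith),
          max_eq_left (by linarith)]
        ring
    rw [hfc]
    exact hf c hc hcn
end

section
/- Exact interpolation by one-hidden-layer ReLU networks (perfect learning): let m ≥ 1, let N ≥ 1, and let (x¹, y¹), …, (x^N, y^N) ∈ ℝᵐ × ℝ be training instances whose inputs x¹, …, x^N are pairwise distinct. Then there exist a number of hidden nodes p ∈ ℕ, output-layer parameters w₀ᵒ, w₁ᵒ, …, w_pᵒ ∈ ℝ, and hidden-layer parameters w_{i0}ᴴ ∈ ℝ and w_iᴴ ∈ ℝᵐ for i = 1, …, p, such that the network f(x) = w₀ᵒ + Σ_{i=1}^{p} w_iᵒ · ReLU(w_{i0}ᴴ + (w_iᴴ)ᵀ x) satisfies f(xᶜ) = yᶜ exactly for every c = 1, …, N. -/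
open scoped RealInnerProductSpace

/-- One-dimensional exact interpolation by a ReLU network. -/
lemma oneD_relu_interp (Y : ℝ → ℝ) (T : Finset ℝ) :
    ∃ (p : ℕ) (w0 : ℝ) (a b w : Fin p → ℝ),
      ∀ t ∈ T, w0 + ∑ i, a i * max 0 (b i + w i * t) = Y t := by
  induction T using Finset.induction_on_max with
  | empty => exact ⟨0, 0, ![], ![], ![], by simp⟩
  | insert u T hu IH =>
    obtain ⟨p, w0, ao, bo, wo, h⟩ := IH
    set c : ℝ := if h : T.Nonempty then (T.max' h + u) / 2 else u - 1 with hc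
    have hc2 : 0 < u - c := by
      rw [hc]
      split_ifs with h'
      · have := hu _ (T.max'_mem h')
        linarith
      · linarith
    have hc1 : ∀ t ∈ T, t - c < 0 := by
      intro t ht
      have h' : T.Nonempty := ⟨t, ht⟩
      have h1 : t ≤ T.max' h' := T.le_max' t ht
      have h2 := hu _ (T.max'_mem h')
      rw [hc, dif_pos h']
      linarith
    set α : ℝ := (Y u - (w0 + ∑ i, ao i * max 0 (bo i + wo i * u))) / (u - c) with hα
    refine ⟨p + 1, w0, Fin.cons α ao, Fin.cons (-c) bo, Fin.cons 1 wo, ?_⟩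
    intro t ht
    rw [Finset.mem_insert] at ht
    rw [Fin.sum_univ_succ]
    simp only [Fin.cons_zero, Fin.cons_succ]
    rcases ht with rfl | ht
    · have hm : max 0 (-c + 1 * t) = t - c := by
        rw [max_eq_right] <;> linarith
      rw [hm, hα, div_mul_cancel₀ _ (by linarith : t - c ≠ 0)]
      ring
    · have hm : max 0 (-c + 1 * t) = 0 := by
        rw [max_eq_left]
        have := hc1 t ht
        linarith
      rw [hm, mul_zero, zero_add, h t ht]

/-- There is a direction separating all the (distinct) inputs. -/
lemma generic_dir (m N : ℕ) (x : Fin N → EuclideanSpace ℝ (Fin m))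
    (hx : ∀ c c' : Fin N, c ≠ c' → x c ≠ x c') :
    ∃ v : EuclideanSpace ℝ (Fin m), ∀ c c' : Fin N, c ≠ c' → ⟪v, x c⟫ ≠ ⟪v, x c'⟫ := by
  by_contra hcon
  push_neg at hcon
  set ι := {q : Fin N × Fin N // q.1 ≠ q.2}
  have hcov : ⋃ q : ι, ((LinearMap.ker ((innerSL ℝ (x q.1.1 - x q.1.2) : EuclideanSpace ℝ (Fin m) →L[ℝ] ℝ) : EuclideanSpace ℝ (Fin m) →ₗ[ℝ] ℝ) :
      Subspace ℝ (EuclideanSpace ℝ (Fin m))) : Set (EuclideanSpace ℝ (Fin m))) = Set.univ := by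
    ext v
    simp only [Set.mem_iUnion, Set.mem_univ, iff_true, SetLike.mem_coe, LinearMap.mem_ker]
    obtain ⟨c, c', hcc, he⟩ := hcon v
    refine ⟨⟨(c, c'), hcc⟩, ?_⟩
    simp only [ContinuousLinearMap.coe_coe, innerSL_apply_apply, inner_sub_left]
    rw [real_inner_comm (x c) v, real_inner_comm (x c') v] at *
    rw [he]; ring
  obtain ⟨⟨⟨c, c'⟩, hcc⟩, htop⟩ := Subspace.exists_eq_top_of_iUnion_eq_univ hcov
  have hd : x c - x c' ≠ 0 := sub_ne_zero_of_ne (hx c c' hcc)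
  have : (x c - x c') ∈ LinearMap.ker ((innerSL ℝ (x c - x c') : EuclideanSpace ℝ (Fin m) →L[ℝ] ℝ) : EuclideanSpace ℝ (Fin m) →ₗ[ℝ] ℝ) := by
    rw [htop]; trivial
  rw [LinearMap.mem_ker] at this
  simp only [ContinuousLinearMap.coe_coe, innerSL_apply_apply] at this
  exact hd (inner_self_eq_zero.mp this)

/-- Perfect learning / exact interpolation: for any training
instances (x¹, y¹), …, (x^N, y^N) with pairwise distinct inputs, there exists a
one-hidden-layer ReLU network f(x) = w₀ᵒ + Σᵢ wᵢᵒ · ReLU(w_{i0}ᴴ + (wᵢᴴ)ᵀx)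
interpolating all instances exactly. -/
theorem relu_network_exact_interpolation (m N : ℕ) (hm : 1 ≤ m) (hN : 1 ≤ N)
    (x : Fin N → EuclideanSpace ℝ (Fin m)) (y : Fin N → ℝ)
    (hx : ∀ c c' : Fin N, c ≠ c' → x c ≠ x c') :
    ∃ (p : ℕ) (w0 : ℝ) (wo : Fin p → ℝ) (bH : Fin p → ℝ)
      (wH : Fin p → EuclideanSpace ℝ (Fin m)),
      ∀ c : Fin N, w0 + ∑ i, wo i * max 0 (bH i + ⟪wH i, x c⟫) = y c := by
  obtain ⟨v, hv⟩ := generic_dir m N x hx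
  set t : Fin N → ℝ := fun c => ⟪v, x c⟫ with htdef
  set Y : ℝ → ℝ := fun s => if h : ∃ c, t c = s then y h.choose else 0 with hYdef
  have hY : ∀ c, Y (t c) = y c := by
    intro c
    have hex : ∃ c', t c' = t c := ⟨c, rfl⟩
    rw [hYdef]
    simp only [dif_pos hex]
    congr 1
    by_contra hne
    exact hv _ _ hne hex.choose_spec
  obtain ⟨p, w0, a, b, w, h⟩ := oneD_relu_interp Y (Finset.image t Finset.univ)
  refine ⟨p, w0, a, b, fun i => w i • v, ?_⟩
  intro c
  have := h (t c) (Finset.mem_image_of_mem t (Finset.mem_univ c))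
  rw [hY c] at this
  convert this using 3 with i
  rw [real_inner_smul_left]
end

section
/- Inductive step of the pupil learning mechanism (Lemma 1 invariant): let m ≥ 1 and ε ≥ 0, let (x¹, y¹), …, (x^k, y^k) ∈ ℝᵐ × ℝ, and let f be a one-hidden-layer ReLU network with p hidden nodes satisfying |f(xᶜ) − yᶜ| ≤ ε for all c = 1, …, k. Let (x⁰, y⁰) ∈ ℝᵐ × ℝ be a new instance with x⁰ ≠ xᶜ for all c. Then there exists a one-hidden-layer ReLU network f′ with p + 3 hidden nodes, agreeing with f in its first p hidden nodes and output bias, such that |f′(xᶜ) − yᶜ| ≤ ε for all c = 1, …, k and f′(x⁰) = y⁰. Consequently, given the new instance, the maximal absolute residual D over all k + 1 instances can be made to satisfy D ≤ ε by adding three hidden nodes. -/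
open scoped RealInnerProductSpace

lemma exists_gamma {m k : ℕ} (x : Fin k → EuclideanSpace ℝ (Fin m))
    (x0 : EuclideanSpace ℝ (Fin m)) (hx0 : ∀ c, x0 ≠ x c) :
    ∃ γ : EuclideanSpace ℝ (Fin m), ∀ c, ⟪γ, x0 - x c⟫ ≠ 0 := by
  by_contra h
  push_neg at h
  have hcov : ⋃ c, ((LinearMap.ker ((innerSL ℝ (x0 - x c) : EuclideanSpace ℝ (Fin m) →L[ℝ] ℝ) : EuclideanSpace ℝ (Fin m) →ₗ[ℝ] ℝ)
      : Submodule ℝ (EuclideanSpace ℝ (Fin m))) : Set (EuclideanSpace ℝ (Fin m)))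
      = Set.univ := by
    ext γ
    simp only [Set.mem_iUnion, Set.mem_univ, iff_true, SetLike.mem_coe, LinearMap.mem_ker]
    obtain ⟨c, hc⟩ := h γ
    refine ⟨c, ?_⟩
    simp only [ContinuousLinearMap.coe_coe, innerSL_apply_apply]
    rw [real_inner_comm]; exact hc
  obtain ⟨c, hc⟩ := Subspace.exists_eq_top_of_iUnion_eq_univ hcov
  have hne : x0 - x c ≠ 0 := sub_ne_zero.mpr (hx0 c)
  have h2 : ⟪(x0 - x c), (x0 - x c)⟫ = 0 := by
    have : (x0 - x c) ∈ (⊤ : Submodule ℝ (EuclideanSpace ℝ (Fin m))) := trivial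
    rw [← hc] at this
    simpa only [LinearMap.mem_ker, ContinuousLinearMap.coe_coe, innerSL_apply_apply] using this
  exact hne (inner_self_eq_zero.mp h2)

lemma hat_zero (w ζ t : ℝ) (hζ : 0 < ζ) (ht : ζ ≤ |t|) :
    w * max 0 (ζ + t) + -(2 * w) * max 0 t + w * max 0 (t - ζ) = 0 := by
  rcases le_abs.mp ht with h | h
  · rw [max_eq_right (by linarith), max_eq_right (by linarith), max_eq_right (by linarith)]
    ring
  · rw [max_eq_left (by linarith), max_eq_left (by linarith), max_eq_left (by linarith)]
    ring

/-- Inductive step of the PLM, Lemma 1 invariant: if a 2LNN with p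
hidden nodes makes all k instances acceptable (residual at most ε) and (x⁰, y⁰)
is a new instance with x⁰ distinct from all xᶜ, then there is a 2LNN with p + 3
hidden nodes, agreeing with f in its first p hidden nodes and output bias, that
keeps all k instances acceptable and fits (x⁰, y⁰) exactly. -/
theorem plm_inductive_step (m k p : ℕ) (hm : 1 ≤ m) (ε : ℝ) (hε : 0 ≤ ε)
    (x : Fin k → EuclideanSpace ℝ (Fin m)) (y : Fin k → ℝ)
    (w0 : ℝ) (wo : Fin p → ℝ) (bH : Fin p → ℝ)
    (wH : Fin p → EuclideanSpace ℝ (Fin m))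
    (f : EuclideanSpace ℝ (Fin m) → ℝ)
    (hf : f = fun z => w0 + ∑ i, wo i * max 0 (bH i + ⟪wH i, z⟫))
    (hfit : ∀ c, |f (x c) - y c| ≤ ε)
    (x0 : EuclideanSpace ℝ (Fin m)) (y0 : ℝ) (hx0 : ∀ c, x0 ≠ x c) :
    ∃ (wo' : Fin (p + 3) → ℝ) (bH' : Fin (p + 3) → ℝ)
      (wH' : Fin (p + 3) → EuclideanSpace ℝ (Fin m)),
      (∀ i : Fin p, wo' (Fin.castAdd 3 i) = wo i ∧
        bH' (Fin.castAdd 3 i) = bH i ∧ wH' (Fin.castAdd 3 i) = wH i) ∧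
      (∀ c, |(w0 + ∑ i, wo' i * max 0 (bH' i + ⟪wH' i, x c⟫)) - y c| ≤ ε) ∧
      (w0 + ∑ i, wo' i * max 0 (bH' i + ⟪wH' i, x0⟫)) = y0 := by
  obtain ⟨γ, hγ⟩ := exists_gamma x x0 hx0
  set S : Finset ℝ := insert (1 : ℝ) (Finset.image (fun c => |⟪γ, x0 - x c⟫|) Finset.univ)
  set ζ : ℝ := S.min' ⟨1, Finset.mem_insert_self _ _⟩ with hζdef
  have hζpos : 0 < ζ := by
    have hmem := S.min'_mem ⟨1, Finset.mem_insert_self _ _⟩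
    rw [← hζdef] at hmem
    rcases Finset.mem_insert.mp hmem with h | h
    · rw [h]; norm_num
    · obtain ⟨c, _, hc⟩ := Finset.mem_image.mp h
      rw [← hc]; exact abs_pos.mpr (hγ c)
  have hζle : ∀ c, ζ ≤ |⟪γ, x0 - x c⟫| := fun c =>
    Finset.min'_le _ _ (Finset.mem_insert_of_mem (Finset.mem_image_of_mem _ (Finset.mem_univ c)))
  set w : ℝ := (y0 - f x0) / ζ with hw
  refine ⟨Fin.append wo ![w, -(2 * w), w],
    Fin.append bH ![ζ - ⟪γ, x0⟫, -⟪γ, x0⟫, -ζ - ⟪γ, x0⟫],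
    Fin.append wH ![γ, γ, γ], ?_, ?_, ?_⟩
  · intro i
    simp [Fin.append_left]
  · intro c
    have key : (w0 + ∑ i : Fin (p + 3), Fin.append wo ![w, -(2 * w), w] i *
        max 0 (Fin.append bH ![ζ - ⟪γ, x0⟫, -⟪γ, x0⟫, -ζ - ⟪γ, x0⟫] i +
          ⟪Fin.append wH ![γ, γ, γ] i, x c⟫)) = f (x c) := by
      rw [hf, Fin.sum_univ_add]
      simp only [Fin.append_left, Fin.append_right]
      rw [Fin.sum_univ_three]
      simp only [Matrix.cons_val_zero, Matrix.cons_val_one, Matrix.head_cons,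
        Matrix.cons_val_two, Matrix.tail_cons]
      have ht : ζ ≤ |⟪γ, x c⟫ - ⟪γ, x0⟫| := by
        have := hζle c
        rw [inner_sub_right] at this
        rwa [abs_sub_comm] at this
      have h0 := hat_zero w ζ (⟪γ, x c⟫ - ⟪γ, x0⟫) hζpos ht
      have e1 : ζ - ⟪γ, x0⟫ + ⟪γ, x c⟫ = ζ + (⟪γ, x c⟫ - ⟪γ, x0⟫) := by ring
      have e2 : -⟪γ, x0⟫ + ⟪γ, x c⟫ = ⟪γ, x c⟫ - ⟪γ, x0⟫ := by ring
      have e3 : -ζ - ⟪γ, x0⟫ + ⟪γ, x c⟫ = (⟪γ, x c⟫ - ⟪γ, x0⟫) - ζ := by ring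
      rw [e1, e2, e3]
      linarith [h0]
    rw [key]
    exact hfit c
  · rw [Fin.sum_univ_add]
    simp only [Fin.append_left, Fin.append_right]
    rw [Fin.sum_univ_three]
    simp only [Matrix.cons_val_zero, Matrix.cons_val_one, Matrix.head_cons,
      Matrix.cons_val_two, Matrix.tail_cons]
    have e1 : ζ - ⟪γ, x0⟫ + ⟪γ, x0⟫ = ζ := by ring
    have e2 : -⟪γ, x0⟫ + ⟪γ, x0⟫ = 0 := by ring
    have e3 : -ζ - ⟪γ, x0⟫ + ⟪γ, x0⟫ = -ζ := by ring
    rw [e1, e2, e3, max_eq_right hζpos.le, max_self, max_eq_left (by linarith)]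
    have hfx0 : f x0 = w0 + ∑ i, wo i * max 0 (bH i + ⟪wH i, x0⟫) := by rw [hf]
    have : w * ζ = y0 - f x0 := by
      rw [hw]; field_simp
    rw [hfx0] at this
    linarith
end
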